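/- Trivial solution of the AoA estimator (Proposition 2): with Ā, d1(0), d2(0,0) as above, if the columns of Ā span a subspace of dimension N (i.e., rank(Ā) = N), then rank([Ā, d1(0), d2(0,0)]) = rank(Ā) = N, and consequently d1(0) and d2(0,0) lie in the column span of Ā; in particular, d1(0) and d2(0,0) are orthogonal to every vector of ℂ^{N²} that is orthogonal to all columns of Ā (so φ = 0 annihilates the MUSIC null-space projection and is a trivial solution of the AoA spectrum). -/

import Mathlib

open scoped BigOperators
open Matrix

/-- Entry `i` of the D-CSIR block `v^{(n')}(ω)`. -/
noncomputable def vblock {N : ℕ} (S : ℂ) (D : Fin N → ℂ) (ω : ℂ) (n' i : Fin N) : ℂ :=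
  (S + ω * D i) / (S + ω * D n') - (S + D i) / (S + D n')

/-- The `N² × P` matrix `Ā` whose `p`-th column concatenates the blocks `v^{(n')}(ω_p)`. -/
noncomputable def AbarMat {N P : ℕ} (S : ℂ) (D : Fin N → ℂ) (ω : Fin P → ℂ) :
    Matrix (Fin N × Fin N) (Fin P) ℂ :=
  fun r p => vblock S D (ω p) r.1 r.2

/-- First-order AoA basis vector at `φ = 0`, with entries `(D_{n'} − D_i)/Y_{n'}²`. -/
noncomputable def d1vec {N : ℕ} (S : ℂ) (D : Fin N → ℂ) : Fin N × Fin N → ℂ :=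
  fun r => (D r.1 - D r.2) / (S + D r.1) ^ 2

/-- Second-order AoA basis vector at `φ = 0`, with entries `2(D_i − D_{n'})/Y_{n'}³`. -/
noncomputable def d2vec {N : ℕ} (S : ℂ) (D : Fin N → ℂ) : Fin N × Fin N → ℂ :=
  fun r => 2 * (D r.2 - D r.1) / (S + D r.1) ^ 3

/-- The augmented matrix `[Ā, d1(0), d2(0,0)]`. -/
noncomputable def augMat {N P : ℕ} (S : ℂ) (D : Fin N → ℂ) (ω : Fin P → ℂ) :
    Matrix (Fin N × Fin N) (Fin P ⊕ Fin 2) ℂ :=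
  fun r c =>
    Sum.elim (fun p => AbarMat S D ω r p)
      (fun j => if j = 0 then d1vec S D r else d2vec S D r) c

/-- Auxiliary basis vectors: `evec D k` is the vector whose `(n',i)` entry is
`D n' − D i` when `n' = k` and `0` otherwise. -/
noncomputable def evec {N : ℕ} (D : Fin N → ℂ) (k : Fin N) : Fin N × Fin N → ℂ :=
  fun r => if r.1 = k then D r.1 - D r.2 else 0

lemma col_eq_sum {N P : ℕ} (S : ℂ) (D : Fin N → ℂ) (ω : Fin P → ℂ)
    (hY : ∀ i, S + D i ≠ 0) (hω : ∀ p n', S + ω p * D n' ≠ 0) (p : Fin P) :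
    (fun r => AbarMat S D ω r p)
      = ∑ k, (S * (1 - ω p) / ((S + ω p * D k) * (S + D k))) • evec D k := by
  funext r
  have hsum : (∑ k, (S * (1 - ω p) / ((S + ω p * D k) * (S + D k))) • evec D k) r
      = ∑ k, (S * (1 - ω p) / ((S + ω p * D k) * (S + D k))) * evec D k r := by
    simp [Finset.sum_apply]
  rw [hsum]
  rw [Finset.sum_eq_single r.1]
  · simp only [evec, if_pos rfl, ↓reduceIte]
    have h1 := hω p r.1
    have h2 := hY r.1
    simp only [AbarMat, vblock]
    field_simp
    ring
  · intro k _ hk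
    simp [evec, Ne.symm hk]
  · intro h; exact absurd (Finset.mem_univ r.1) h

lemma d1_eq_sum {N : ℕ} (S : ℂ) (D : Fin N → ℂ) :
    d1vec S D = ∑ k, ((S + D k) ^ 2)⁻¹ • evec D k := by
  funext r
  have hsum : (∑ k, ((S + D k) ^ 2)⁻¹ • evec D k) r
      = ∑ k, ((S + D k) ^ 2)⁻¹ * evec D k r := by simp [Finset.sum_apply]
  rw [hsum, Finset.sum_eq_single r.1]
  · simp [evec, d1vec, div_eq_inv_mul, mul_comm]
  · intro k _ hk; simp [evec, Ne.symm hk]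
  · intro h; exact absurd (Finset.mem_univ r.1) h

lemma d2_eq_sum {N : ℕ} (S : ℂ) (D : Fin N → ℂ) :
    d2vec S D = ∑ k, (-2 / (S + D k) ^ 3) • evec D k := by
  funext r
  have hsum : (∑ k, (-2 / (S + D k) ^ 3) • evec D k) r
      = ∑ k, (-2 / (S + D k) ^ 3) * evec D k r := by simp [Finset.sum_apply]
  rw [hsum, Finset.sum_eq_single r.1]
  · simp [evec, d2vec]
    ring
  · intro k _ hk; simp [evec, Ne.symm hk]
  · intro h; exact absurd (Finset.mem_univ r.1) h

/-- Trivial solution of the AoA estimator (Proposition 2): if `rank(Ā) = N`, then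
the augmented matrix `[Ā, d1(0), d2(0,0)]` has the same rank `N`, `d1(0)` and
`d2(0,0)` lie in the column span of `Ā`, and both are orthogonal to every vector
orthogonal to all columns of `Ā` (so `φ = 0` annihilates the MUSIC null-space
projection). -/
theorem aoa_estimator_trivial_solution
    (N : ℕ) (hN : 1 ≤ N) (S : ℂ) (D : Fin N → ℂ)
    (hY : ∀ i, S + D i ≠ 0)
    (P : ℕ) (hP : 1 ≤ P) (ω : Fin P → ℂ)
    (hω : ∀ p n', S + ω p * D n' ≠ 0)
    (hrank : (AbarMat S D ω).rank = N) :
    (augMat S D ω).rank = N ∧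
    d1vec S D ∈ Submodule.span ℂ (Set.range fun p r => AbarMat S D ω r p) ∧
    d2vec S D ∈ Submodule.span ℂ (Set.range fun p r => AbarMat S D ω r p) ∧
    (∀ x : Fin N × Fin N → ℂ,
      (∀ p, ∑ r, star (AbarMat S D ω r p) * x r = 0) →
        (∑ r, star (d1vec S D r) * x r = 0 ∧
         ∑ r, star (d2vec S D r) * x r = 0)) := by
  classical
  set W : Submodule ℂ (Fin N × Fin N → ℂ) := Submodule.span ℂ (Set.range (evec D)) with hW
  set C : Submodule ℂ (Fin N × Fin N → ℂ) :=
    Submodule.span ℂ (Set.range (AbarMat S D ω)ᵀ) with hC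
  have hCW : C ≤ W := by
    rw [hC, Submodule.span_le]
    rintro _ ⟨p, rfl⟩
    have : (AbarMat S D ω)ᵀ p = fun r => AbarMat S D ω r p := rfl
    rw [this, col_eq_sum S D ω hY hω p]
    exact Submodule.sum_mem _ fun k _ =>
      Submodule.smul_mem _ _ (Submodule.subset_span ⟨k, rfl⟩)
  have hfinC : Module.finrank ℂ C = N := by
    rw [hC]; rw [Matrix.rank_eq_finrank_span_cols] at hrank; exact hrank
  have hfinW : Module.finrank ℂ W ≤ N := by
    have := finrank_range_le_card (R := ℂ) (evec D)
    simpa [Set.finrank, hW] using this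
  have hCeqW : C = W := by
    apply Submodule.eq_of_le_of_finrank_le hCW
    rw [hfinC]; exact hfinW
  have hd1W : d1vec S D ∈ W := by
    rw [d1_eq_sum]
    exact Submodule.sum_mem _ fun k _ =>
      Submodule.smul_mem _ _ (Submodule.subset_span ⟨k, rfl⟩)
  have hd2W : d2vec S D ∈ W := by
    rw [d2_eq_sum]
    exact Submodule.sum_mem _ fun k _ =>
      Submodule.smul_mem _ _ (Submodule.subset_span ⟨k, rfl⟩)
  have hrangeeq : (Set.range fun p r => AbarMat S D ω r p) = Set.range (AbarMat S D ω)ᵀ := rfl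
  have hd1C : d1vec S D ∈ C := hCeqW ▸ hd1W
  have hd2C : d2vec S D ∈ C := hCeqW ▸ hd2W
  refine ⟨?_, by rw [hrangeeq]; exact hd1C, by rw [hrangeeq]; exact hd2C, ?_⟩
  · -- rank of augmented matrix
    rw [Matrix.rank_eq_finrank_span_cols]
    have hspan : Submodule.span ℂ (Set.range (augMat S D ω)ᵀ) = C := by
      apply le_antisymm
      · rw [Submodule.span_le]
        rintro _ ⟨c, rfl⟩
        rcases c with p | j
        · exact Submodule.subset_span ⟨p, rfl⟩
        · by_cases hj : j = 0
          · have : (augMat S D ω)ᵀ (Sum.inr j) = d1vec S D := by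
              funext r; simp [augMat, Matrix.transpose, hj]
            rw [this]; exact hd1C
          · have : (augMat S D ω)ᵀ (Sum.inr j) = d2vec S D := by
              funext r; simp [augMat, Matrix.transpose, hj]
            rw [this]; exact hd2C
      · rw [hC, Submodule.span_le]
        rintro _ ⟨p, rfl⟩
        exact Submodule.subset_span ⟨Sum.inl p, rfl⟩
    change Module.finrank ℂ (Submodule.span ℂ (Set.range (augMat S D ω)ᵀ)) = N
    rw [hspan, hfinC]
  · intro x hx
    have key : ∀ y ∈ C, ∑ r, star (y r) * x r = 0 := by
      intro y hy
      induction hy using Submodule.span_induction with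
      | mem y hy => obtain ⟨p, rfl⟩ := hy; exact hx p
      | zero => simp
      | add y z _ _ hy hz =>
        have h : ∑ r, star ((y + z) r) * x r
            = (∑ r, star (y r) * x r) + ∑ r, star (z r) * x r := by
          rw [← Finset.sum_add_distrib]
          exact Finset.sum_congr rfl fun r _ => by simp [add_mul]
        rw [h, hy, hz, add_zero]
      | smul c y _ hy =>
        have : ∑ r, star ((c • y) r) * x r = star c * ∑ r, star (y r) * x r := by
          rw [Finset.mul_sum]; congr 1; funext r
          simp [Pi.smul_apply, smul_eq_mul, StarMul.star_mul]; ring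
        rw [this, hy, mul_zero]
    exact ⟨key _ hd1C, key _ hd2C⟩
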